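/- The series ∑_{k=0}^∞ k·binom(2k, k)·(1/9)^{k} converges and its sum equals 6·√5/25. -/

import Mathlib

open Finset Polynomial

namespace CentralBinomialAux

lemma desc_smeval_neg_half (k : ℕ) :
    (descPochhammer ℤ k).smeval ((-1 : ℝ)/2) =
      (-1)^k * (Nat.factorial (2*k)) / (4^k * Nat.factorial k) := by
  induction k with
  | zero => simp
  | succ k ih =>
    rw [descPochhammer_succ_right, Polynomial.smeval_mul, ih, Polynomial.smeval_sub,
      Polynomial.smeval_X, Polynomial.smeval_natCast]
    have h1 : Nat.factorial (2*(k+1)) = (2*k+2)*((2*k+1)*Nat.factorial (2*k)) := by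
      have : 2*(k+1) = (2*k+1)+1 := by ring
      rw [this, Nat.factorial_succ, Nat.factorial_succ]
    have h2 : Nat.factorial (k+1) = (k+1)*Nat.factorial k := Nat.factorial_succ k
    have h3 : (Nat.factorial k : ℝ) ≠ 0 := Nat.cast_ne_zero.mpr (Nat.factorial_ne_zero k)
    rw [h1, h2]
    push_cast
    field_simp
    ring

lemma desc_smeval_neg_one (k : ℕ) :
    (descPochhammer ℤ k).smeval ((-1 : ℝ)) = (-1)^k * Nat.factorial k := by
  induction k with
  | zero => simp
  | succ k ih =>
    rw [descPochhammer_succ_right, Polynomial.smeval_mul, ih, Polynomial.smeval_sub,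
      Polynomial.smeval_X, Polynomial.smeval_natCast, Nat.factorial_succ]
    push_cast
    ring

lemma ring_choose_neg_half (k : ℕ) :
    Ring.choose ((-1 : ℝ)/2) k = (-1)^k * ((2*k).choose k : ℝ) / 4^k := by
  have h := (Ring.descPochhammer_eq_factorial_smul_choose ((-1:ℝ)/2) k).symm
  rw [desc_smeval_neg_half, nsmul_eq_mul] at h
  have hcn : (2*k).choose k * Nat.factorial k * Nat.factorial k = Nat.factorial (2*k) := by
    have := Nat.choose_mul_factorial_mul_factorial (by omega : k ≤ 2*k)
    rwa [show 2*k - k = k by omega] at this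
  have hc : ((2*k).choose k : ℝ) * (Nat.factorial k) * (Nat.factorial k) =
      Nat.factorial (2*k) := by exact_mod_cast congrArg (Nat.cast : ℕ → ℝ) hcn
  have h3 : (Nat.factorial k : ℝ) ≠ 0 := Nat.cast_ne_zero.mpr (Nat.factorial_ne_zero k)
  have h4 : (4:ℝ)^k ≠ 0 := by positivity
  apply mul_left_cancel₀ h3
  rw [h]
  field_simp
  linear_combination (-1:ℝ) * hc

lemma ring_choose_neg_one (k : ℕ) :
    Ring.choose ((-1 : ℝ)) k = (-1)^k := by
  have h := (Ring.descPochhammer_eq_factorial_smul_choose ((-1:ℝ)) k).symm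
  rw [desc_smeval_neg_one, nsmul_eq_mul] at h
  have h3 : (Nat.factorial k : ℝ) ≠ 0 := Nat.cast_ne_zero.mpr (Nat.factorial_ne_zero k)
  apply mul_left_cancel₀ h3
  rw [h]; ring

/-- Chu–Vandermonde convolution for central binomial coefficients. -/
lemma conv_one (k : ℕ) :
    ∑ ij ∈ antidiagonal k,
      ((2*ij.1).choose ij.1 : ℝ)/4^ij.1 * (((2*ij.2).choose ij.2 : ℝ)/4^ij.2) = 1 := by
  have h := Ring.add_choose_eq (r := (-1:ℝ)/2) (s := (-1:ℝ)/2) k (Commute.all _ _)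
  rw [show (-1:ℝ)/2 + (-1:ℝ)/2 = -1 by ring, ring_choose_neg_one] at h
  have h2 : ∑ ij ∈ antidiagonal k,
      Ring.choose ((-1:ℝ)/2) ij.1 * Ring.choose ((-1:ℝ)/2) ij.2
      = (-1)^k * ∑ ij ∈ antidiagonal k,
        ((2*ij.1).choose ij.1 : ℝ)/4^ij.1 * (((2*ij.2).choose ij.2 : ℝ)/4^ij.2) := by
    rw [mul_sum]
    refine sum_congr rfl fun ij hij => ?_
    rw [ring_choose_neg_half, ring_choose_neg_half]
    rw [← mem_antidiagonal.mp hij, pow_add]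
    ring
  rw [h2] at h
  have hk : ((-1:ℝ))^k ≠ 0 := by simp [pow_ne_zero]
  apply mul_left_cancel₀ hk
  rw [mul_one, ← h]

lemma sum_cb_four_pow (k : ℕ) :
    ∑ i ∈ range (k+1), (2*i).choose i * 4^(k-i) = (2*k+1) * (2*k).choose k := by
  induction k with
  | zero => simp
  | succ k ih =>
    rw [Finset.sum_range_succ]
    have h1 : ∑ i ∈ range (k+1), (2*i).choose i * 4^(k+1-i)
        = 4 * ∑ i ∈ range (k+1), (2*i).choose i * 4^(k-i) := by
      rw [Finset.mul_sum]
      refine sum_congr rfl fun i hi => ?_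
      have hik : i ≤ k := Nat.lt_succ_iff.mp (mem_range.mp hi)
      rw [show k+1-i = (k-i)+1 by omega, pow_succ]; ring
    rw [h1, ih, Nat.sub_self, pow_zero, mul_one]
    have h := Nat.succ_mul_centralBinom_succ k
    simp only [Nat.centralBinom_eq_two_mul_choose] at h
    rw [show 2*(k+1) = 2*k+2 by ring]
    calc 4 * ((2*k+1) * (2*k).choose k) + (2*k+2).choose (k+1)
        = 2*(2*(2*k+1) * (2*k).choose k) + (2*k+2).choose (k+1) := by ring
      _ = 2*((k+1) * (2*(k+1)).choose (k+1)) + (2*k+2).choose (k+1) := by rw [h]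
      _ = (2*(k+1)+1) * (2*(k+1)).choose (k+1) := by
          rw [show 2*(k+1) = 2*k+2 by ring]; ring

lemma cb_le (k : ℕ) : (2*k).choose k ≤ 4^k :=
  le_trans (Nat.choose_le_succ (2*k) k) (Nat.choose_middle_le_pow k)

noncomputable def b (k : ℕ) : ℝ := ((2*k).choose k : ℝ) * (1/9)^k

lemma b_nonneg (k : ℕ) : 0 ≤ b k := by unfold b; positivity

lemma b_le (k : ℕ) : b k ≤ (4/9)^k := by
  unfold b
  have h4 : ((2*k).choose k : ℝ) ≤ 4^k := by exact_mod_cast cb_le k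
  have h49 : ((4:ℝ)/9)^k = 4^k * (1/9)^k := by rw [← mul_pow]; norm_num
  rw [h49]
  exact mul_le_mul_of_nonneg_right h4 (by positivity)

lemma summable_b : Summable b :=
  Summable.of_nonneg_of_le b_nonneg b_le
    (summable_geometric_of_lt_one (by norm_num) (by norm_num))

lemma summable_norm_b : Summable fun k => ‖b k‖ := by
  simpa [Real.norm_of_nonneg (b_nonneg _)] using summable_b

noncomputable def g (k : ℕ) : ℝ := (4/9)^k

lemma hasSum_g : HasSum g (9/5) := by
  have h : ((9:ℝ)/5) = (1 - 4/9)⁻¹ := by norm_num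
  rw [h]
  exact hasSum_geometric_of_lt_one (by norm_num) (by norm_num)

lemma summable_norm_g : Summable fun k => ‖g k‖ := by
  have h : ∀ k, ‖g k‖ = g k := fun k => Real.norm_of_nonneg (by unfold g; positivity)
  simpa [h] using hasSum_g.summable

noncomputable def S : ℝ := ∑' k, b k

lemma S_nonneg : 0 ≤ S := tsum_nonneg b_nonneg

lemma S_sq : S * S = 9/5 := by
  have h := tsum_mul_tsum_eq_tsum_sum_antidiagonal_of_summable_norm
    (f := b) (g := b) summable_norm_b summable_norm_b
  have h2 : ∀ k : ℕ, ∑ ij ∈ antidiagonal k, b ij.1 * b ij.2 = (4/9)^k := by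
    intro k
    have hc := conv_one k
    have heq : ∑ ij ∈ antidiagonal k, b ij.1 * b ij.2
        = (4/9)^k * ∑ ij ∈ antidiagonal k,
          ((2*ij.1).choose ij.1 : ℝ)/4^ij.1 * (((2*ij.2).choose ij.2 : ℝ)/4^ij.2) := by
      rw [mul_sum]
      refine sum_congr rfl fun ij hij => ?_
      have h49 : ((4:ℝ)/9)^k = (4^ij.1*4^ij.2) * ((1/9)^ij.1*(1/9)^ij.2) := by
        rw [← pow_add, ← pow_add, ← mul_pow, mem_antidiagonal.mp hij]; norm_num
      unfold b
      rw [h49]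
      field_simp
    rw [heq, hc, mul_one]
  rw [show S * S = (∑' k, b k) * (∑' k, b k) from rfl, h]
  simp_rw [h2]
  exact hasSum_g.tsum_eq

lemma S_val : S = 3 * Real.sqrt 5 / 5 := by
  have h5 : Real.sqrt 5 * Real.sqrt 5 = 5 := Real.mul_self_sqrt (by norm_num)
  have h : S = Real.sqrt (9/5) := by
    rw [← Real.sqrt_mul_self S_nonneg, S_sq]
  have h2 : ((9:ℝ)/5) = (3 * Real.sqrt 5 / 5)^2 := by
    rw [pow_two]; linear_combination (-9/25 : ℝ) * h5
  rw [h, h2]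
  exact Real.sqrt_sq (by positivity)

lemma hasSum_f3 :
    HasSum (fun k : ℕ => (2*(k:ℝ)+1) * ((2*k).choose k : ℝ) * (1/9)^k) (9/5 * S) := by
  have h := tsum_mul_tsum_eq_tsum_sum_antidiagonal_of_summable_norm
    (f := b) (g := g) summable_norm_b summable_norm_g
  have hsum := (summable_norm_sum_mul_antidiagonal_of_summable_norm
    (f := b) (g := g) summable_norm_b summable_norm_g).of_norm
  have h2 : ∀ k : ℕ, ∑ ij ∈ antidiagonal k, b ij.1 * g ij.2
      = (2*(k:ℝ)+1) * ((2*k).choose k : ℝ) * (1/9)^k := by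
    intro k
    rw [Finset.Nat.sum_antidiagonal_eq_sum_range_succ_mk]
    have hterm : ∀ i ∈ range (k+1), b i * g (k - i)
        = (((2*i).choose i * 4^(k-i) : ℕ) : ℝ) * (1/9)^k := by
      intro i hi
      have hik : i ≤ k := Nat.lt_succ_iff.mp (mem_range.mp hi)
      unfold b g
      have h49 : ((4:ℝ)/9)^(k-i) = 4^(k-i) * (1/9)^(k-i) := by rw [← mul_pow]; norm_num
      have hk : ((1:ℝ)/9)^k = (1/9)^i * (1/9)^(k-i) := by
        rw [← pow_add]; congr 1; omega
      rw [h49, hk]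
      push_cast
      ring
    rw [sum_congr rfl hterm, ← Finset.sum_mul, ← Nat.cast_sum, sum_cb_four_pow]
    push_cast
    ring
  have hval : (∑' k, b k) * (∑' k, g k) = 9/5 * S := by
    rw [hasSum_g.tsum_eq]; unfold S; ring
  rw [hval] at h
  simp_rw [h2] at h hsum
  exact hsum.hasSum_iff.mpr h.symm

end CentralBinomialAux

open CentralBinomialAux in
/-- `∑ k·binom(2k,k) x^k = 2x/(1−4x)^{3/2}` evaluated at `x = 1/9` gives `6√5/25`. -/
theorem central_binomial_weighted_sum_at_one_ninth :
    HasSum (fun k : ℕ => (k : ℝ) * ((2 * k).choose k : ℝ) * (1/9) ^ k) (6 * Real.sqrt 5 / 25) := by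
  have hb : HasSum b S := summable_b.hasSum
  have h := (hasSum_f3.sub hb).div_const 2
  have hfun : (fun k : ℕ => ((2*(k:ℝ)+1) * ((2*k).choose k : ℝ) * (1/9)^k - b k) / 2)
      = fun k : ℕ => (k : ℝ) * ((2 * k).choose k : ℝ) * (1/9) ^ k := by
    funext k; unfold b; ring
  rw [hfun] at h
  have hval : (9/5 * S - S) / 2 = 6 * Real.sqrt 5 / 25 := by
    rw [S_val]; ring
  rwa [hval] at h
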